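/- Let G be a graph, H a graph on vertex set {1,...,h}, and V_1,...,V_h disjoint vertex subsets of G with |V_i| ≥ n for all i, such that the number of canonical copies of H (copies with the i-th vertex in V_i) is at least γ·∏|V_i|. Then there exist subsets V_i' ⊆ V_i with |V_i'| = n for all i such that the number of canonical copies of H in (V_1',...,V_h') is at least γ·n^h. -/
import Mathlib


open Finset

/-- Number of canonical copies of `H` in `G` with respect to parts `W i`:
injections `f : Fin h → V` with `f i ∈ W i` and preserving adjacency. -/
noncomputable def canonCount {V : Type*} {h : ℕ} (G : SimpleGraph V)
    (H : SimpleGraph (Fin h)) (W : Fin h → Finset V) : ℕ :=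
  Nat.card {f : Fin h → V // Function.Injective f ∧ (∀ i, f i ∈ W i) ∧
    ∀ i j, H.Adj i j → G.Adj (f i) (f j)}

open Classical in
lemma canonCount_eq_filter {V : Type*} [Fintype V] {h : ℕ} (G : SimpleGraph V)
    (H : SimpleGraph (Fin h)) (W : Fin h → Finset V) :
    canonCount G H W = (univ.filter fun f : Fin h → V =>
      Function.Injective f ∧ (∀ i, f i ∈ W i) ∧
        ∀ i j, H.Adj i j → G.Adj (f i) (f j)).card := by
  rw [canonCount, Nat.card_eq_fintype_card, Fintype.card_subtype]

lemma card_filter_mem_powersetCard {V : Type*} [DecidableEq V] {s : Finset V} {x : V}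
    (hx : x ∈ s) {n : ℕ} (hn : 0 < n) :
    ((s.powersetCard n).filter (fun A => x ∈ A)).card = (s.card - 1).choose (n - 1) := by
  have hm : 1 ≤ s.card := Finset.card_pos.mpr ⟨x, hx⟩
  have h1 : (s.powersetCard n).filter (fun A => ¬ x ∈ A) = (s.erase x).powersetCard n := by
    ext A
    simp only [mem_filter, mem_powersetCard, Finset.subset_erase]
    tauto
  have h2 := Finset.card_filter_add_card_filter_not (s := s.powersetCard n)
    (p := fun A => x ∈ A)
  rw [h1] at h2
  rw [Finset.card_powersetCard, Finset.card_powersetCard, Finset.card_erase_of_mem hx] at h2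
  have hp : (s.card - 1).choose (n - 1) + (s.card - 1).choose n = s.card.choose n := by
    have : s.card - 1 + 1 = s.card := Nat.succ_pred_eq_of_pos hm
    have hn' : n - 1 + 1 = n := Nat.succ_pred_eq_of_pos hn
    calc (s.card - 1).choose (n - 1) + (s.card - 1).choose n
        = (s.card - 1).choose (n - 1) + (s.card - 1).choose (n - 1 + 1) := by rw [hn']
      _ = (s.card - 1 + 1).choose (n - 1 + 1) := (Nat.choose_succ_succ _ _).symm
      _ = s.card.choose n := by rw [this, hn']
  omega

lemma mul_choose_pred (m n : ℕ) (hm : 0 < m) (hn : 0 < n) :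
    m * (m - 1).choose (n - 1) = n * m.choose n := by
  obtain ⟨m', rfl⟩ := Nat.exists_eq_succ_of_ne_zero hm.ne'
  obtain ⟨n', rfl⟩ := Nat.exists_eq_succ_of_ne_zero hn.ne'
  simpa [Nat.succ_sub_one, mul_comm] using Nat.add_one_mul_choose_eq m' n'

/-- subsampling a `(γ, ≥ n)`-inflation to a `(γ, n)`-inflation. -/
theorem subsample_inflation {V : Type*} [Fintype V] {h n : ℕ} (hn : 0 < n)
    (G : SimpleGraph V) (H : SimpleGraph (Fin h)) (W : Fin h → Finset V)
    (γ : ℝ) (hγ0 : 0 < γ) (hγ1 : γ ≤ 1)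
    (hdisj : ∀ i j, i ≠ j → Disjoint (W i) (W j))
    (hsize : ∀ i, n ≤ (W i).card)
    (hcount : γ * ∏ i, ((W i).card : ℝ) ≤ (canonCount G H W : ℝ)) :
    ∃ W' : Fin h → Finset V, (∀ i, W' i ⊆ W i) ∧ (∀ i, (W' i).card = n) ∧
      γ * (n : ℝ) ^ h ≤ (canonCount G H W' : ℝ) := by
  classical
  set S : Finset (Fin h → Finset V) := Fintype.piFinset (fun i => (W i).powersetCard n) with hS
  have hSne : S.Nonempty := by
    rw [hS, Fintype.piFinset_nonempty]
    exact fun i => Finset.powersetCard_nonempty.mpr (hsize i)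
  set F : Finset (Fin h → V) := univ.filter fun f : Fin h → V =>
      Function.Injective f ∧ (∀ i, f i ∈ W i) ∧
        ∀ i j, H.Adj i j → G.Adj (f i) (f j) with hF
  -- canonCount on a subfamily W' ∈ S
  have key1 : ∀ W' ∈ S, canonCount G H W' =
      (F.filter (fun f => ∀ i, f i ∈ W' i)).card := by
    intro W' hW'
    have hsub : ∀ i, W' i ⊆ W i := by
      intro i
      have := (Fintype.mem_piFinset.mp hW') i
      exact (Finset.mem_powersetCard.mp this).1
    rw [canonCount_eq_filter]
    congr 1
    ext f
    simp only [hF, mem_filter, mem_univ, true_and]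
    constructor
    · rintro ⟨h1, h2, h3⟩
      exact ⟨⟨h1, fun i => hsub i (h2 i), h3⟩, h2⟩
    · rintro ⟨⟨h1, _, h3⟩, h2⟩
      exact ⟨h1, h2, h3⟩
  -- double counting
  have key2 : ∑ W' ∈ S, (F.filter (fun f => ∀ i, f i ∈ W' i)).card
      = F.card * ∏ i, ((W i).card - 1).choose (n - 1) := by
    have : ∀ W' ∈ S, (F.filter (fun f => ∀ i, f i ∈ W' i)).card
        = ∑ f ∈ F, (if ∀ i, f i ∈ W' i then 1 else 0) := by
      intro W' _
      rw [Finset.card_filter]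
    rw [Finset.sum_congr rfl this, Finset.sum_comm]
    have inner : ∀ f ∈ F, ∑ W' ∈ S, (if ∀ i, f i ∈ W' i then 1 else 0)
        = ∏ i, ((W i).card - 1).choose (n - 1) := by
      intro f hf
      have hfW : ∀ i, f i ∈ W i := (Finset.mem_filter.mp hf).2.2.1
      rw [← Finset.card_filter]
      have : S.filter (fun W' => ∀ i, f i ∈ W' i)
          = Fintype.piFinset (fun i => ((W i).powersetCard n).filter (fun A => f i ∈ A)) := by
        ext W'
        simp only [hS, mem_filter, Fintype.mem_piFinset, forall_and]
      rw [this, Fintype.card_piFinset]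
      exact Finset.prod_congr rfl fun i _ => card_filter_mem_powersetCard (hfW i) hn
    rw [Finset.sum_congr rfl inner, Finset.sum_const, smul_eq_mul]
  -- the averaging inequality, in ℝ
  have hcard : (canonCount G H W : ℝ) = (F.card : ℝ) := by
    rw [canonCount_eq_filter]
  have hSc : (S.card : ℝ) = ∏ i, (((W i).card.choose n : ℕ) : ℝ) := by
    rw [hS, Fintype.card_piFinset]
    push_cast
    exact Finset.prod_congr rfl fun i _ => by rw [Finset.card_powersetCard]
  have hWpos : ∀ i, 0 < (W i).card := fun i => lt_of_lt_of_le hn (hsize i)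
  have hnat : ∑ W' ∈ S, canonCount G H W'
      = F.card * ∏ i, ((W i).card - 1).choose (n - 1) := by
    rw [Finset.sum_congr rfl key1, key2]
  have hsum : ∑ W' ∈ S, (canonCount G H W' : ℝ)
      = (F.card : ℝ) * ∏ i, ((((W i).card - 1).choose (n - 1) : ℕ) : ℝ) := by
    rw [← Nat.cast_sum, hnat]
    push_cast
    ring
  have hFcard : γ * ∏ i, ((W i).card : ℝ) ≤ (F.card : ℝ) := by rw [← hcard]; exact hcount
  have hPnn : (0:ℝ) ≤ ∏ i, ((((W i).card - 1).choose (n - 1) : ℕ) : ℝ) :=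
    Finset.prod_nonneg fun i _ => by positivity
  have hfact : ∀ i : Fin h, (n : ℝ) * (((W i).card.choose n : ℕ) : ℝ)
      = ((W i).card : ℝ) * ((((W i).card - 1).choose (n - 1) : ℕ) : ℝ) := by
    intro i
    exact_mod_cast (mul_choose_pred (W i).card n (hWpos i) hn).symm
  have e1 : (S.card : ℝ) * ((n:ℝ)^h)
      = (∏ i, ((W i).card : ℝ)) * ∏ i, ((((W i).card - 1).choose (n - 1) : ℕ) : ℝ) := by
    have : ((n:ℝ))^h = ∏ _i : Fin h, (n:ℝ) := by
      simp
    rw [hSc, this, mul_comm, ← Finset.prod_mul_distrib,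
      Finset.prod_congr rfl (fun i _ => hfact i), Finset.prod_mul_distrib]
  have hmain : ∑ W' ∈ S, (γ * (n : ℝ) ^ h) ≤ ∑ W' ∈ S, (canonCount G H W' : ℝ) := by
    rw [Finset.sum_const, nsmul_eq_mul, hsum]
    calc (S.card : ℝ) * (γ * (n:ℝ) ^ h)
        = γ * ((S.card : ℝ) * (n:ℝ) ^ h) := by ring
      _ = (γ * ∏ i, ((W i).card : ℝ)) * ∏ i, ((((W i).card - 1).choose (n - 1) : ℕ) : ℝ) := by
          rw [e1]; ring
      _ ≤ (F.card : ℝ) * ∏ i, ((((W i).card - 1).choose (n - 1) : ℕ) : ℝ) :=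
          mul_le_mul_of_nonneg_right hFcard hPnn
  obtain ⟨W', hW'S, hW'le⟩ := Finset.exists_le_of_sum_le hSne hmain
  refine ⟨W', ?_, ?_, hW'le⟩
  · intro i
    exact (Finset.mem_powersetCard.mp ((Fintype.mem_piFinset.mp hW'S) i)).1
  · intro i
    exact (Finset.mem_powersetCard.mp ((Fintype.mem_piFinset.mp hW'S) i)).2
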